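/- Let A be an n×n integer matrix with determinant ±1. Then no complex eigenvalue of A is a root of unity if and only if for every nonzero integer vector v ∈ ℤⁿ the orbit { (Aᵀ)^k v : k ∈ ℕ } of the dual map Aᵀ : ℤⁿ → ℤⁿ is infinite. -/

import Mathlib

open Matrix Polynomial
open scoped Classical

noncomputable section

/-- The `n`-torus `ℝⁿ/ℤⁿ`, realized as `Fin n → ℝ/ℤ`. -/
abbrev Torus (n : ℕ) := Fin n → AddCircle (1 : ℝ)

/-- The projection `p : ℝⁿ → Tⁿ`. -/
def torusProj (n : ℕ) (x : Fin n → ℝ) : Torus n := fun i => (x i : AddCircle (1 : ℝ))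

/-- The linear action of an integer matrix on `ℝⁿ`. -/
def realMulVec {n : ℕ} (A : Matrix (Fin n) (Fin n) ℤ) (x : Fin n → ℝ) : Fin n → ℝ :=
  (A.map (Int.cast : ℤ → ℝ)).mulVec x

/-- The complex eigenvalues (with multiplicity) of an integer matrix. -/
def eigsC {n : ℕ} (A : Matrix (Fin n) (Fin n) ℤ) : Multiset ℂ :=
  ((A.map (Int.cast : ℤ → ℂ)).charpoly).roots

/-- A complex number is a root of unity if some positive power of it is `1`. -/
def IsRootOfUnity (z : ℂ) : Prop := ∃ k : ℕ, 1 ≤ k ∧ z ^ k = 1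
namespace OrbitAux

variable {n : ℕ}

lemma charpoly_eval (M : Matrix (Fin n) (Fin n) ℂ) (z : ℂ) :
    M.charpoly.eval z = (z • (1 : Matrix (Fin n) (Fin n) ℂ) - M).det := by
  rw [Matrix.charpoly, eval_det, matPolyEquiv_charmatrix]
  simp [Matrix.smul_one_eq_diagonal]

/-- `det (A^m - 1) = 0` over ℤ iff some complex eigenvalue satisfies `μ^m = 1`. -/
lemma det_pow_sub_one_eq_zero_iff (A : Matrix (Fin n) (Fin n) ℤ) {m : ℕ} (hm : 1 ≤ m) :
    (A ^ m - 1).det = 0 ↔ ∃ μ ∈ ((A.map (Int.cast : ℤ → ℂ)).charpoly).roots, μ ^ m = 1 := by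
  set φ := (Int.castRingHom ℂ)
  set Ac : Matrix (Fin n) (Fin n) ℂ := A.map (Int.cast : ℤ → ℂ) with hAc
  have hmap : (φ.mapMatrix) (A ^ m - 1) = Ac ^ m - 1 := by
    have h1 : A.map (Int.cast : ℤ → ℂ) = φ.mapMatrix A := rfl
    rw [map_sub, map_pow, RingHom.map_one, hAc, h1]
  have hdetc : ((A ^ m - 1).det = 0) ↔ (Ac ^ m - 1).det = 0 := by
    rw [show (Ac ^ m - 1).det = φ ((A ^ m - 1).det) by rw [RingHom.map_det, hmap]]
    simp [φ]
  rw [hdetc]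
  constructor
  · intro hdet
    by_contra hno
    push_neg at hno
    -- factor X^m - 1 into linear factors
    have hmonic : (X ^ m - 1 : ℂ[X]).Monic := by
      simpa using monic_X_pow_sub_C (1 : ℂ) (Nat.one_le_iff_ne_zero.mp hm)
    have hsplit : (X ^ m - 1 : ℂ[X]).Splits := IsAlgClosed.splits _
    have hfact := hsplit.eq_prod_roots_of_monic hmonic
    obtain ⟨l, hl⟩ := Quotient.exists_rep (X ^ m - 1 : ℂ[X]).roots
    have hl' : (X ^ m - 1 : ℂ[X]).roots = (l : Multiset ℂ) := hl.symm
    have hfact' : (X ^ m - 1 : ℂ[X]) = (l.map (fun ζ => X - C ζ)).prod := by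
      rw [hfact, hl']
      rfl
    -- apply aeval Ac
    have haev : Ac ^ m - 1 =
        (l.map (fun ζ => Ac - algebraMap ℂ (Matrix (Fin n) (Fin n) ℂ) ζ)).prod := by
      have h2 := congrArg (aeval Ac) hfact'
      rw [map_list_prod, List.map_map] at h2
      simp only [Function.comp_def, map_sub, map_pow, aeval_X, aeval_C, _root_.map_one] at h2
      exact h2
    have hunit : IsUnit (Ac ^ m - 1) := by
      rw [haev]
      apply List.prod_isUnit
      intro x hx
      simp only [List.mem_map] at hx
      obtain ⟨ζ, hζl, rfl⟩ := hx
      have hζroot : ζ ∈ (X ^ m - 1 : ℂ[X]).roots := by rw [hl']; exact hζl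
      have hζm : ζ ^ m = 1 := by
        have := isRoot_of_mem_roots hζroot
        simp only [IsRoot, eval_sub, eval_pow, eval_X, eval_one, sub_eq_zero] at this
        exact this
      -- ζ is not an eigenvalue
      have hne : Ac.charpoly.eval ζ ≠ 0 := by
        intro h0
        exact hno ζ (by
          rw [mem_roots]
          · exact h0
          · exact Ac.charpoly_monic.ne_zero) hζm
      rw [charpoly_eval] at hne
      have : IsUnit (ζ • (1 : Matrix (Fin n) (Fin n) ℂ) - Ac) := by
        rw [Matrix.isUnit_iff_isUnit_det]
        exact isUnit_iff_ne_zero.mpr hne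
      have hneg : Ac - algebraMap ℂ (Matrix (Fin n) (Fin n) ℂ) ζ =
          -(ζ • (1 : Matrix (Fin n) (Fin n) ℂ) - Ac) := by
        rw [Algebra.algebraMap_eq_smul_one]
        abel
      rw [hneg]
      exact this.neg
    rw [Matrix.isUnit_iff_isUnit_det, isUnit_iff_ne_zero] at hunit
    exact hunit hdet
  · rintro ⟨μ, hμroot, hμm⟩
    -- eigenvector over ℂ
    have h1 : (μ • (1 : Matrix (Fin n) (Fin n) ℂ) - Ac).det = 0 := by
      rw [← charpoly_eval]
      exact isRoot_of_mem_roots hμroot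
    obtain ⟨w, hw0, hw⟩ := (Matrix.exists_mulVec_eq_zero_iff).mpr h1
    have hev : Ac.mulVec w = μ • w := by
      have := hw
      rw [Matrix.sub_mulVec, sub_eq_zero] at this
      rw [← this, Matrix.smul_mulVec, Matrix.one_mulVec]
    have hpow : ∀ k : ℕ, (Ac ^ k).mulVec w = μ ^ k • w := by
      intro k
      induction k with
      | zero => simp
      | succ k ih =>
        rw [pow_succ, ← Matrix.mulVec_mulVec, hev, Matrix.mulVec_smul, ih, smul_smul,
          pow_succ, mul_comm]
    have hker : (Ac ^ m - 1).mulVec w = 0 := by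
      rw [Matrix.sub_mulVec, hpow, hμm, one_smul, Matrix.one_mulVec, sub_self]
    exact Matrix.exists_mulVec_eq_zero_iff.mp ⟨w, hw0, hker⟩

/-- `det (A^m - 1) = 0` over ℤ iff `Aᵀ^m` fixes a nonzero integer vector. -/
lemma det_pow_sub_one_eq_zero_iff_fixed (A : Matrix (Fin n) (Fin n) ℤ) (m : ℕ) :
    (A ^ m - 1).det = 0 ↔ ∃ v : Fin n → ℤ, v ≠ 0 ∧ (Aᵀ ^ m).mulVec v = v := by
  have hdet : (Aᵀ ^ m - 1).det = (A ^ m - 1).det := by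
    have h1 : (Aᵀ ^ m - 1) = (A ^ m - 1)ᵀ := by
      rw [Matrix.transpose_sub, Matrix.transpose_pow, Matrix.transpose_one]
    rw [h1, Matrix.det_transpose]
  rw [← hdet, ← Matrix.exists_mulVec_eq_zero_iff]
  constructor
  · rintro ⟨v, hv0, hv⟩
    refine ⟨v, hv0, ?_⟩
    rw [Matrix.sub_mulVec, sub_eq_zero] at hv
    rw [hv, Matrix.one_mulVec]
  · rintro ⟨v, hv0, hv⟩
    refine ⟨v, hv0, ?_⟩
    rw [Matrix.sub_mulVec, hv, Matrix.one_mulVec, sub_self]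

end OrbitAux

/-- No complex eigenvalue of `A` is a root of unity iff every nonzero orbit of the dual map
`Aᵀ : ℤⁿ → ℤⁿ` is infinite. -/
theorem no_root_of_unity_iff_infinite_dual_orbits {n : ℕ}
    (A : Matrix (Fin n) (Fin n) ℤ) (hAdet : A.det = 1 ∨ A.det = -1) :
    (∀ z ∈ eigsC A, ¬ IsRootOfUnity z) ↔
      ∀ v : Fin n → ℤ, v ≠ 0 → (Set.range fun k : ℕ => (Aᵀ ^ k).mulVec v).Infinite := by
  constructor
  · intro hno v hv0
    by_contra hfin
    rw [Set.not_infinite] at hfin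
    have hninj : ¬ Function.Injective (fun k : ℕ => (Aᵀ ^ k).mulVec v) := by
      intro hinj
      exact (Set.infinite_range_of_injective hinj) hfin
    rw [Function.not_injective_iff] at hninj
    obtain ⟨j, l, hjl, hne⟩ := hninj
    -- wlog j < l
    wlog hlt : j < l generalizing j l
    · exact this l j hjl.symm hne.symm (by omega)
    -- Aᵀ is a unit
    have hU : IsUnit (Aᵀ : Matrix (Fin n) (Fin n) ℤ) := by
      rw [Matrix.isUnit_iff_isUnit_det, Matrix.det_transpose]
      rcases hAdet with h | h <;> rw [h] <;> exact Int.isUnit_iff.mpr (by tauto)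
    obtain ⟨u, hu⟩ := hU.pow j
    have hcan : ∀ x y : Fin n → ℤ,
        (Aᵀ ^ j).mulVec x = (Aᵀ ^ j).mulVec y → x = y := by
      intro x y h
      have h2 := congrArg (fun z => ((↑u⁻¹ : Matrix (Fin n) (Fin n) ℤ)).mulVec z) h
      simpa [Matrix.mulVec_mulVec, ← hu, Units.inv_mul] using h2
    have hfix : (Aᵀ ^ (l - j)).mulVec v = v := by
      apply hcan
      have : (Aᵀ ^ j).mulVec ((Aᵀ ^ (l - j)).mulVec v) = (Aᵀ ^ l).mulVec v := by
        rw [Matrix.mulVec_mulVec, ← pow_add, Nat.add_sub_cancel' hlt.le]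
      rw [this, ← hjl]
    have hm1 : 1 ≤ l - j := by omega
    have hdet0 := (OrbitAux.det_pow_sub_one_eq_zero_iff_fixed A (l - j)).mpr ⟨v, hv0, hfix⟩
    obtain ⟨μ, hμroot, hμm⟩ := (OrbitAux.det_pow_sub_one_eq_zero_iff A hm1).mp hdet0
    exact hno μ hμroot ⟨l - j, hm1, hμm⟩
  · intro hinf z hz hzu
    obtain ⟨k, hk1, hzk⟩ := hzu
    have hdet0 := (OrbitAux.det_pow_sub_one_eq_zero_iff A hk1).mpr ⟨z, hz, hzk⟩
    obtain ⟨v, hv0, hfix⟩ := (OrbitAux.det_pow_sub_one_eq_zero_iff_fixed A k).mp hdet0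
    have hper : ∀ j : ℕ, (Aᵀ ^ j).mulVec v ∈ (fun r => (Aᵀ ^ r).mulVec v) '' Set.Iio k := by
      intro j
      induction j using Nat.strong_induction_on with
      | _ j ih =>
        by_cases hj : j < k
        · exact ⟨j, hj, rfl⟩
        · push_neg at hj
          have heq : (Aᵀ ^ j).mulVec v = (Aᵀ ^ (j - k)).mulVec v := by
            have hj' : j = (j - k) + k := (Nat.sub_add_cancel hj).symm
            rw [hj', pow_add, ← Matrix.mulVec_mulVec, hfix, Nat.add_sub_cancel]
          rw [heq]
          exact ih (j - k) (by omega)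
    have hsub : (Set.range fun j : ℕ => (Aᵀ ^ j).mulVec v) ⊆
        (fun r => (Aᵀ ^ r).mulVec v) '' Set.Iio k := by
      rintro _ ⟨j, rfl⟩
      exact hper j
    exact Set.not_infinite.mpr (Set.Finite.subset ((Set.finite_Iio k).image _) hsub)
      (hinf v hv0)

end
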